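/- Let X be a real random variable with X ≤ 1 a.s. and E[X] ≤ 0. Then for all γ ≥ 0, E[e^{γX}] ≤ e^{(e^γ − 1 − γ)·Var(X)}. -/

import Mathlib

open MeasureTheory Real

section Aux

private lemma f2_deriv (x : ℝ) :
    HasDerivAt (fun t : ℝ => Real.exp t - 1 - t - t ^ 2 / 2) (Real.exp x - 1 - x) x := by
  have h := (((Real.hasDerivAt_exp x).sub_const 1).fun_sub (hasDerivAt_id x)).fun_sub
      ((hasDerivAt_pow 2 x).div_const 2)
  refine h.congr_deriv ?_
  norm_num

private lemma f2_mono : Monotone (fun t : ℝ => Real.exp t - 1 - t - t ^ 2 / 2) := by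
  apply monotone_of_deriv_nonneg
  · intro x
    exact (f2_deriv x).differentiableAt
  · intro x
    rw [(f2_deriv x).deriv]
    have := Real.add_one_le_exp x
    linarith

private lemma hS1 {t : ℝ} (ht : 0 ≤ t) : 1 + t + t ^ 2 / 2 ≤ Real.exp t := by
  have h := f2_mono ht
  simp only [Real.exp_zero] at h
  nlinarith [h]

private lemma hL0 {t : ℝ} (ht : t ≤ 0) : Real.exp t ≤ 1 + t + t ^ 2 / 2 := by
  have h := f2_mono ht
  simp only [Real.exp_zero] at h
  nlinarith [h]

private lemma p_deriv (x : ℝ) :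
    HasDerivAt (fun t : ℝ => t * (Real.exp t - 1) - 2 * (Real.exp t - 1 - t))
      (x * Real.exp x - Real.exp x + 1) x := by
  have h := (((hasDerivAt_id x).fun_mul ((Real.hasDerivAt_exp x).sub_const 1)).fun_sub
      ((((Real.hasDerivAt_exp x).sub_const 1).fun_sub (hasDerivAt_id x)).const_mul 2))
  refine h.congr_deriv ?_
  simp only [id_eq]
  ring

/-- `p t = t (e^t - 1) - 2 (e^t - 1 - t) ≥ 0` for `t ≥ 0`. -/
private lemma p_nonneg {t : ℝ} (ht : 0 ≤ t) :
    0 ≤ t * (Real.exp t - 1) - 2 * (Real.exp t - 1 - t) := by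
  have hmono : Monotone (fun t : ℝ => t * (Real.exp t - 1) - 2 * (Real.exp t - 1 - t)) := by
    apply monotone_of_deriv_nonneg
    · intro x; exact (p_deriv x).differentiableAt
    · intro x
      rw [(p_deriv x).deriv]
      -- (1 - x) ≤ exp (-x) hence (1-x) exp x ≤ 1
      have h1 : (1 - x) * Real.exp x ≤ 1 := by
        have h2 := Real.add_one_le_exp (-x)
        have h3 : (1 - x) ≤ Real.exp (-x) := by linarith
        calc (1 - x) * Real.exp x ≤ Real.exp (-x) * Real.exp x := by
              rcases le_or_gt (1 - x) 0 with h | h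
              · nlinarith [Real.exp_pos x, Real.exp_pos (-x)]
              · exact mul_le_mul_of_nonneg_right h3 (Real.exp_pos x).le
          _ = 1 := by rw [← Real.exp_add]; simp
      nlinarith
  have h := hmono ht
  simpa using h

/-- monotonicity of `(exp t - 1 - t)/t²` on `(0, ∞)`. -/
private lemma k_mono : MonotoneOn (fun t : ℝ => (Real.exp t - 1 - t) / t ^ 2) (Set.Ioi 0) := by
  have hder : ∀ x : ℝ, x ∈ Set.Ioi (0:ℝ) →
      HasDerivAt (fun t : ℝ => (Real.exp t - 1 - t) / t ^ 2)
        (((Real.exp x - 1) * x ^ 2 - (Real.exp x - 1 - x) * (2 * x)) / (x ^ 2) ^ 2) x := by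
    intro x hx
    have hx0 : (x:ℝ) ≠ 0 := ne_of_gt hx
    have hnum : HasDerivAt (fun t : ℝ => Real.exp t - 1 - t) (Real.exp x - 1) x := by
      have := ((Real.hasDerivAt_exp x).sub_const 1).fun_sub (hasDerivAt_id x)
      simpa using this
    have hden : HasDerivAt (fun t : ℝ => t ^ 2) (2 * x) x := by
      have := hasDerivAt_pow 2 x
      simpa using this
    exact hnum.div hden (pow_ne_zero 2 hx0)
  apply monotoneOn_of_deriv_nonneg (convex_Ioi 0)
  · apply ContinuousOn.div
    · fun_prop
    · fun_prop
    · intro x hx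
      exact pow_ne_zero 2 (ne_of_gt hx)
  · intro x hx
    rw [interior_Ioi] at hx
    exact (hder x hx).differentiableAt.differentiableWithinAt
  · intro x hx
    rw [interior_Ioi] at hx
    rw [(hder x hx).deriv]
    have hx0 : (0:ℝ) < x := hx
    have hp := p_nonneg hx0.le
    apply div_nonneg
    · nlinarith
    · positivity

/-- L1: for `0 ≤ γ`, `0 ≤ s ≤ 1`: `h(γ s) ≤ s² h(γ)`. -/
private lemma L1 {γ s : ℝ} (hγ : 0 ≤ γ) (hs0 : 0 ≤ s) (hs1 : s ≤ 1) :
    Real.exp (γ * s) - 1 - γ * s ≤ s ^ 2 * (Real.exp γ - 1 - γ) := by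
  rcases eq_or_lt_of_le hγ with hγ0 | hγpos
  · simp [← hγ0]
  rcases eq_or_lt_of_le hs0 with hs0' | hspos
  · simp [← hs0']
  have h1 : (0:ℝ) < γ * s := mul_pos hγpos hspos
  have h2 : γ * s ≤ γ := by nlinarith
  have := k_mono (Set.mem_Ioi.2 h1) (Set.mem_Ioi.2 hγpos) h2
  rw [div_le_div_iff₀ (by positivity) (by positivity)] at this
  have heq : (Real.exp γ - 1 - γ) * (γ * s) ^ 2 = s ^ 2 * (Real.exp γ - 1 - γ) * γ ^ 2 := by ring
  rw [heq] at this
  exact le_of_mul_le_mul_right this (by positivity)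

private lemma B_deriv (γ : ℝ) (x : ℝ) :
    HasDerivAt (fun s : ℝ => (2 * s + γ * s ^ 2) * (Real.exp γ - 1 - γ)
        + γ * Real.exp (-γ * (s - 1)) - γ * Real.exp γ)
      ((2 + γ * (2 * x)) * (Real.exp γ - 1 - γ) + γ * (Real.exp (-γ * (x - 1)) * (-γ))) x := by
  have h1 : HasDerivAt (fun s : ℝ => 2 * s + γ * s ^ 2) (2 + γ * (2 * x)) x := by
    have ha : HasDerivAt (fun s : ℝ => 2 * s) 2 x := by
      simpa using (hasDerivAt_id x).const_mul (2:ℝ)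
    have hb : HasDerivAt (fun s : ℝ => γ * s ^ 2) (γ * (2 * x)) x := by
      have := (hasDerivAt_pow 2 x).const_mul γ
      simpa using this
    exact ha.add hb
  have h2 : HasDerivAt (fun s : ℝ => Real.exp (-γ * (s - 1))) (Real.exp (-γ * (x - 1)) * (-γ)) x := by
    have hinner : HasDerivAt (fun s : ℝ => -γ * (s - 1)) (-γ) x := by
      simpa using ((hasDerivAt_id x).sub_const 1).const_mul (-γ)
    exact (Real.hasDerivAt_exp _).comp x hinner
  exact ((h1.mul_const _).add (h2.const_mul γ)).sub_const (γ * Real.exp γ)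

/-- B ≥ 0 on [1, ∞). -/
private lemma B_nonneg {γ s : ℝ} (hγ : 0 ≤ γ) (hs : 1 ≤ s) :
    0 ≤ (2 * s + γ * s ^ 2) * (Real.exp γ - 1 - γ)
        + γ * Real.exp (-γ * (s - 1)) - γ * Real.exp γ := by
  have hc : γ ^ 2 / 2 ≤ Real.exp γ - 1 - γ := by have := hS1 hγ; linarith
  have hc0 : 0 ≤ Real.exp γ - 1 - γ := by nlinarith
  have hmono : MonotoneOn (fun s : ℝ => (2 * s + γ * s ^ 2) * (Real.exp γ - 1 - γ)
      + γ * Real.exp (-γ * (s - 1)) - γ * Real.exp γ) (Set.Ici 1) := by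
    apply monotoneOn_of_deriv_nonneg (convex_Ici 1)
    · fun_prop
    · intro x hx
      exact (B_deriv γ x).differentiableAt.differentiableWithinAt
    · intro x hx
      rw [interior_Ici] at hx
      rw [(B_deriv γ x).deriv]
      have hx1 : (1:ℝ) < x := hx
      have hexple : Real.exp (-γ * (x - 1)) ≤ 1 := by
        rw [Real.exp_le_one_iff]
        nlinarith
      have hexppos := Real.exp_pos (-γ * (x - 1))
      have h3 : γ * (Real.exp (-γ * (x - 1)) * -γ) = -(γ ^ 2 * Real.exp (-γ * (x - 1))) := by
        ring
      rw [h3]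
      have h1 : γ ^ 2 * Real.exp (-γ * (x - 1)) ≤ γ ^ 2 := by
        nlinarith [sq_nonneg γ]
      have h2 : 2 * (Real.exp γ - 1 - γ) ≤ (2 + γ * (2 * x)) * (Real.exp γ - 1 - γ) := by
        nlinarith [mul_nonneg hγ (by linarith : (0:ℝ) ≤ 2 * x)]
      linarith
  have hB1 : (0:ℝ) ≤ (2 * 1 + γ * 1 ^ 2) * (Real.exp γ - 1 - γ)
      + γ * Real.exp (-γ * ((1:ℝ) - 1)) - γ * Real.exp γ := by
    simp only [mul_one, one_pow, sub_self, mul_zero, Real.exp_zero]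
    nlinarith
  have := hmono (Set.mem_Ici.2 le_rfl) (Set.mem_Ici.2 hs) hs
  exact le_trans hB1 this

private lemma phi_deriv (γ : ℝ) (x : ℝ) :
    HasDerivAt (fun s : ℝ => s ^ 2 * Real.exp (γ * (s - 1)) * (Real.exp γ - 1 - γ)
        - (Real.exp (γ * s) - 1 - γ * s))
      (((2 * x) * Real.exp (γ * (x - 1)) + x ^ 2 * (Real.exp (γ * (x - 1)) * γ)) * (Real.exp γ - 1 - γ)
        - (Real.exp (γ * x) * γ - γ)) x := by
  have h1 : HasDerivAt (fun s : ℝ => s ^ 2) (2 * x) x := by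
    simpa using hasDerivAt_pow 2 x
  have h2 : HasDerivAt (fun s : ℝ => Real.exp (γ * (s - 1))) (Real.exp (γ * (x - 1)) * γ) x := by
    have hinner : HasDerivAt (fun s : ℝ => γ * (s - 1)) γ x := by
      simpa using ((hasDerivAt_id x).sub_const 1).const_mul γ
    exact (Real.hasDerivAt_exp _).comp x hinner
  have h3 : HasDerivAt (fun s : ℝ => Real.exp (γ * s)) (Real.exp (γ * x) * γ) x := by
    have hinner : HasDerivAt (fun s : ℝ => γ * s) γ x := by
      simpa using (hasDerivAt_id x).const_mul γ
    exact (Real.hasDerivAt_exp _).comp x hinner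
  have h4 : HasDerivAt (fun s : ℝ => Real.exp (γ * s) - 1 - γ * s) (Real.exp (γ * x) * γ - γ) x := by
    have hlin : HasDerivAt (fun s : ℝ => γ * s) γ x := by
      simpa using (hasDerivAt_id x).const_mul γ
    simpa using (h3.sub_const 1).fun_sub hlin
  exact ((h1.mul h2).mul_const _).sub h4

/-- L2: for `0 ≤ γ`, `1 ≤ s`: `h(γ s) ≤ s² e^{γ(s-1)} h(γ)`. -/
private lemma L2 {γ s : ℝ} (hγ : 0 ≤ γ) (hs : 1 ≤ s) :
    Real.exp (γ * s) - 1 - γ * s ≤ s ^ 2 * Real.exp (γ * (s - 1)) * (Real.exp γ - 1 - γ) := by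
  have key : ∀ x ∈ Set.Ici (1:ℝ), (0:ℝ) ≤ s ^ 2 * Real.exp (γ * (s - 1)) * (Real.exp γ - 1 - γ)
      - (Real.exp (γ * s) - 1 - γ * s) → True := fun _ _ _ => trivial
  have hmono : MonotoneOn (fun s : ℝ => s ^ 2 * Real.exp (γ * (s - 1)) * (Real.exp γ - 1 - γ)
      - (Real.exp (γ * s) - 1 - γ * s)) (Set.Ici 1) := by
    apply monotoneOn_of_deriv_nonneg (convex_Ici 1)
    · fun_prop
    · intro x hx
      exact (phi_deriv γ x).differentiableAt.differentiableWithinAt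
    · intro x hx
      rw [interior_Ici] at hx
      rw [(phi_deriv γ x).deriv]
      have hx1 : (1:ℝ) < x := hx
      have hB := B_nonneg hγ hx1.le
      -- φ'(x) = exp(γ(x-1)) * B(x)
      have hfactor : ((2 * x) * Real.exp (γ * (x - 1)) + x ^ 2 * (Real.exp (γ * (x - 1)) * γ))
            * (Real.exp γ - 1 - γ) - (Real.exp (γ * x) * γ - γ)
          = Real.exp (γ * (x - 1)) * ((2 * x + γ * x ^ 2) * (Real.exp γ - 1 - γ)
            + γ * Real.exp (-γ * (x - 1)) - γ * Real.exp γ) := by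
        have e1 : Real.exp (γ * (x - 1)) * Real.exp (-γ * (x - 1)) = 1 := by
          rw [← Real.exp_add]; ring_nf; exact Real.exp_zero
        have e2 : Real.exp (γ * (x - 1)) * Real.exp γ = Real.exp (γ * x) := by
          rw [← Real.exp_add]; ring_nf
        nlinarith [e1, e2]
      rw [hfactor]
      exact mul_nonneg (Real.exp_pos _).le hB
  have h1 : s ^ 2 * Real.exp (γ * (s - 1)) * (Real.exp γ - 1 - γ)
      - (Real.exp (γ * s) - 1 - γ * s)
      ≥ (1:ℝ) ^ 2 * Real.exp (γ * ((1:ℝ) - 1)) * (Real.exp γ - 1 - γ)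
      - (Real.exp (γ * 1) - 1 - γ * 1) := hmono (Set.mem_Ici.2 le_rfl) (Set.mem_Ici.2 hs) hs
  simp only [one_pow, sub_self, mul_zero, Real.exp_zero, one_mul, mul_one] at h1
  linarith

/-- The key pointwise bound: for `x ≤ 1`, `m ≤ 0`, `γ ≥ 0`:
`e^{γx} ≤ e^{γm}(1 + γ(x-m)) + (e^γ - 1 - γ)(x-m)²`. -/
private lemma claim_star {γ m x : ℝ} (hγ : 0 ≤ γ) (hm : m ≤ 0) (hx : x ≤ 1) :
    Real.exp (γ * x) ≤ Real.exp (γ * m) * (1 + γ * (x - m))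
      + (Real.exp γ - 1 - γ) * (x - m) ^ 2 := by
  have hc0 : 0 ≤ Real.exp γ - 1 - γ := by nlinarith [hS1 hγ]
  have hexpm : Real.exp (γ * m) ≤ 1 := by
    rw [Real.exp_le_one_iff]
    exact mul_nonpos_of_nonneg_of_nonpos hγ hm
  have hsplit : Real.exp (γ * x) = Real.exp (γ * m) * (1 + γ * (x - m))
      + Real.exp (γ * m) * (Real.exp (γ * (x - m)) - 1 - γ * (x - m)) := by
    have : Real.exp (γ * x) = Real.exp (γ * m) * Real.exp (γ * (x - m)) := by
      rw [← Real.exp_add]; ring_nf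
    rw [this]; ring
  rw [hsplit]
  have hmain : Real.exp (γ * m) * (Real.exp (γ * (x - m)) - 1 - γ * (x - m))
      ≤ (Real.exp γ - 1 - γ) * (x - m) ^ 2 := by
    set u := x - m with hu
    rcases le_or_gt u 0 with hu0 | hu0
    · -- u ≤ 0 : use hL0
      have hγu : γ * u ≤ 0 := mul_nonpos_of_nonneg_of_nonpos hγ hu0
      have h1 : Real.exp (γ * u) - 1 - γ * u ≤ (γ * u) ^ 2 / 2 := by
        have := hL0 hγu; linarith
      have h2 : 0 ≤ Real.exp (γ * u) - 1 - γ * u := by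
        have := Real.add_one_le_exp (γ * u); linarith
      have h3 : Real.exp (γ * m) * (Real.exp (γ * u) - 1 - γ * u)
          ≤ (γ * u) ^ 2 / 2 := le_trans (mul_le_of_le_one_left h2 hexpm) h1
      have h4 : (γ * u) ^ 2 / 2 ≤ (Real.exp γ - 1 - γ) * u ^ 2 := by
        have hgsq : γ ^ 2 / 2 ≤ Real.exp γ - 1 - γ := by nlinarith [hS1 hγ]
        have heq2 : (γ * u) ^ 2 / 2 = (γ ^ 2 / 2) * u ^ 2 := by ring
        rw [heq2]
        exact mul_le_mul_of_nonneg_right hgsq (sq_nonneg u)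
      exact h3.trans h4
    · rcases le_or_gt u 1 with hu1 | hu1
      · -- 0 < u ≤ 1 : use L1 with s = u
        have h1 : Real.exp (γ * u) - 1 - γ * u ≤ u ^ 2 * (Real.exp γ - 1 - γ) :=
          L1 hγ hu0.le hu1
        have h2 : 0 ≤ Real.exp (γ * u) - 1 - γ * u := by
          have := Real.add_one_le_exp (γ * u); linarith
        calc Real.exp (γ * m) * (Real.exp (γ * u) - 1 - γ * u)
            ≤ 1 * (Real.exp (γ * u) - 1 - γ * u) := mul_le_mul_of_nonneg_right hexpm h2
          _ = Real.exp (γ * u) - 1 - γ * u := one_mul _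
          _ ≤ u ^ 2 * (Real.exp γ - 1 - γ) := h1
          _ = (Real.exp γ - 1 - γ) * u ^ 2 := by ring
      · -- u > 1 : use L2 with s = u
        have h1 : Real.exp (γ * u) - 1 - γ * u
            ≤ u ^ 2 * Real.exp (γ * (u - 1)) * (Real.exp γ - 1 - γ) := L2 hγ hu1.le
        have h2 : Real.exp (γ * m) * Real.exp (γ * (u - 1)) = Real.exp (γ * (x - 1)) := by
          rw [← Real.exp_add]
          congr 1
          rw [hu]
          ring
        have h3 : Real.exp (γ * (x - 1)) ≤ 1 := by
          rw [Real.exp_le_one_iff]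
          exact mul_nonpos_of_nonneg_of_nonpos hγ (by linarith)
        have h2' : 0 ≤ Real.exp (γ * u) - 1 - γ * u := by
          have := Real.add_one_le_exp (γ * u); linarith
        calc Real.exp (γ * m) * (Real.exp (γ * u) - 1 - γ * u)
            ≤ Real.exp (γ * m) * (u ^ 2 * Real.exp (γ * (u - 1)) * (Real.exp γ - 1 - γ)) := by
              exact mul_le_mul_of_nonneg_left h1 (Real.exp_pos _).le
          _ = (Real.exp (γ * m) * Real.exp (γ * (u - 1))) * ((Real.exp γ - 1 - γ) * u ^ 2) := by
              ring
          _ = Real.exp (γ * (x - 1)) * ((Real.exp γ - 1 - γ) * u ^ 2) := by rw [h2]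
          _ ≤ 1 * ((Real.exp γ - 1 - γ) * u ^ 2) := by
              apply mul_le_mul_of_nonneg_right h3
              positivity
          _ = (Real.exp γ - 1 - γ) * u ^ 2 := one_mul _
  linarith

end Aux

/-- MGF bound: if `X ≤ 1` a.s. and `E[X] ≤ 0`, then for all `γ ≥ 0`,
`E[e^{γX}] ≤ e^{(e^γ − 1 − γ)·Var(X)}`. -/
theorem mgf_bound
    {Ω : Type*} {m0 : MeasurableSpace Ω} {μ : Measure Ω} [IsProbabilityMeasure μ]
    (X : Ω → ℝ) (hX : MeasureTheory.MemLp X 2 μ)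
    (hbdd : ∀ᵐ ω ∂μ, X ω ≤ 1) (hmean : ∫ ω, X ω ∂μ ≤ 0)
    (γ : ℝ) (hγ : 0 ≤ γ)
    (hint : Integrable (fun ω => Real.exp (γ * X ω)) μ) :
    ∫ ω, Real.exp (γ * X ω) ∂μ ≤ Real.exp ((Real.exp γ - 1 - γ) * ProbabilityTheory.variance X μ) := by
  set m := ∫ ω, X ω ∂μ with hm_def
  set c := Real.exp γ - 1 - γ with hc_def
  have hc0 : 0 ≤ c := by nlinarith [hS1 hγ]
  have hX1 : Integrable X μ := hX.integrable (by norm_num)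
  have hXm2 : Integrable (fun ω => (X ω - m) ^ 2) μ := by
    have := (hX.sub (memLp_const m)).integrable_sq
    simpa using this
  have hRHSint : Integrable (fun ω => Real.exp (γ * m) * (1 + γ * (X ω - m))
      + c * (X ω - m) ^ 2) μ := by
    apply Integrable.add
    · apply Integrable.const_mul
      exact (integrable_const 1).add (((hX1.sub (integrable_const m)).const_mul γ))
    · exact hXm2.const_mul c
  have hae : ∀ᵐ ω ∂μ, Real.exp (γ * X ω)
      ≤ Real.exp (γ * m) * (1 + γ * (X ω - m)) + c * (X ω - m) ^ 2 := by
    filter_upwards [hbdd] with ω hω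
    exact claim_star hγ hmean hω
  have hstep1 : ∫ ω, Real.exp (γ * X ω) ∂μ
      ≤ ∫ ω, (Real.exp (γ * m) * (1 + γ * (X ω - m)) + c * (X ω - m) ^ 2) ∂μ :=
    integral_mono_ae hint hRHSint hae
  have hvar : ∫ ω, (X ω - m) ^ 2 ∂μ = ProbabilityTheory.variance X μ := by
    rw [ProbabilityTheory.variance_eq_integral hX.aestronglyMeasurable.aemeasurable]
  have hstep2 : ∫ ω, (Real.exp (γ * m) * (1 + γ * (X ω - m)) + c * (X ω - m) ^ 2) ∂μ
      = Real.exp (γ * m) + c * ProbabilityTheory.variance X μ := by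
    have hI1 : Integrable (fun ω => 1 + γ * (X ω - m)) μ :=
      (integrable_const 1).add ((hX1.sub (integrable_const m)).const_mul γ)
    rw [integral_add (hI1.const_mul _) (hXm2.const_mul c), integral_const_mul, integral_const_mul,
      hvar]
    have hXm : Integrable (fun ω => X ω - m) μ := hX1.sub (integrable_const m)
    have h1 : ∫ ω, (1 + γ * (X ω - m)) ∂μ = 1 := by
      rw [integral_add (integrable_const 1) (hXm.const_mul γ), integral_const,
        integral_const_mul, integral_sub hX1 (integrable_const m), integral_const]
      simp [measure_univ, ← hm_def]
    rw [h1, mul_one]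
  have hexpm : Real.exp (γ * m) ≤ 1 := by
    rw [Real.exp_le_one_iff]
    exact mul_nonpos_of_nonneg_of_nonpos hγ hmean
  have hfinal : Real.exp (γ * m) + c * ProbabilityTheory.variance X μ
      ≤ Real.exp (c * ProbabilityTheory.variance X μ) := by
    have h1 := Real.add_one_le_exp (c * ProbabilityTheory.variance X μ)
    linarith
  calc ∫ ω, Real.exp (γ * X ω) ∂μ
      ≤ Real.exp (γ * m) + c * ProbabilityTheory.variance X μ := by rw [← hstep2]; exact hstep1
    _ ≤ Real.exp (c * ProbabilityTheory.variance X μ) := hfinal
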